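/- (Key descent comparison lemma, Euclidean specialization.) Let $f, g: \mathbb{R}^n \to \mathbb{R}$ with $f$ differentiable, $f$ convex, $g$ convex, and $f$ satisfying $f(x + \eta) \le f(x) + \langle \nabla f(x), \eta \rangle + \frac{L}{2}\|\eta\|^2$ for all $x, \eta$. Fix $\tilde L \ge L$ and $x \in \mathbb{R}^n$, and let $\eta^*$ be a minimizer of $\ell(\eta) = \langle \nabla f(x), \eta \rangle + \frac{\tilde L}{2}\|\eta\|^2 + g(x + \eta)$. Set $z = x + \eta^*$. Then for every $y = x + \xi$, $F(z) \le F(y) + \frac{\tilde L}{2}(\|\xi\|^2 - \|\xi - \eta^*\|^2)$, where $F = f + g$. -/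

import Mathlib

open scoped RealInnerProductSpace

lemma grad_ineq {n : ℕ} {f : EuclideanSpace ℝ (Fin n) → ℝ}
    (hconv : ConvexOn ℝ Set.univ f) {x p : EuclideanSpace ℝ (Fin n)}
    (hf : HasGradientAt f p x) (v : EuclideanSpace ℝ (Fin n)) :
    f x + ⟪p, v⟫ ≤ f (x + v) := by
  set φ : ℝ → ℝ := fun t => f (x + t • v) with hφ
  have hderiv : HasDerivAt φ ⟪p, v⟫ 0 := by
    have hc : HasDerivAt (fun t : ℝ => x + t • v) v 0 := by
      simpa using ((hasDerivAt_id (0:ℝ)).smul_const v).const_add x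
    have hfd : HasFDerivAt f ((InnerProductSpace.toDual ℝ _) p) (x + (0:ℝ) • v) := by
      simpa using hf.hasFDerivAt
    have h := hfd.comp_hasDerivAt 0 hc
    simp only [InnerProductSpace.toDual_apply_apply] at h
    exact h
  have hslope : Filter.Tendsto (slope φ 0) (nhdsWithin 0 (Set.Ioi 0)) (nhds ⟪p, v⟫) :=
    (hasDerivAt_iff_tendsto_slope.mp hderiv).mono_left
      (nhdsWithin_mono 0 (fun t ht => ne_of_gt ht : Set.Ioi (0:ℝ) ⊆ {0}ᶜ))
  have hbound : ∀ᶠ t in nhdsWithin (0:ℝ) (Set.Ioi 0), slope φ 0 t ≤ f (x + v) - f x := by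
    filter_upwards [Ioo_mem_nhdsGT_of_mem (Set.left_mem_Ico.mpr one_pos)] with t ht
    have ht0 : 0 < t := ht.1
    have ht1 : t < 1 := ht.2
    have hcomb : φ t ≤ (1 - t) * f x + t * f (x + v) := by
      have h2 := hconv.2 (Set.mem_univ x) (Set.mem_univ (x + v))
        (by linarith : (0:ℝ) ≤ 1 - t) (le_of_lt ht0) (by ring)
      have heq : (1 - t) • x + t • (x + v) = x + t • v := by module
      rw [heq] at h2
      simpa [smul_eq_mul] using h2
    have hφ0 : φ 0 = f x := by simp [hφ]
    rw [slope_def_field, hφ0]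
    rw [sub_zero, div_le_iff₀ ht0]
    nlinarith
  have := le_of_tendsto hslope hbound
  linarith

/-- key descent comparison lemma (Euclidean specialization). -/
theorem stmt7 (n : ℕ) (f g : EuclideanSpace ℝ (Fin n) → ℝ)
    (f' : EuclideanSpace ℝ (Fin n) → EuclideanSpace ℝ (Fin n))
    (hf' : ∀ x, HasGradientAt f (f' x) x)
    (hfconv : ConvexOn ℝ Set.univ f) (hgconv : ConvexOn ℝ Set.univ g)
    (L Ltil : ℝ) (hLL : L ≤ Ltil)
    (hsmooth : ∀ x η : EuclideanSpace ℝ (Fin n),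
      f (x + η) ≤ f x + ⟪f' x, η⟫ + L / 2 * ‖η‖ ^ 2)
    (x ηstar : EuclideanSpace ℝ (Fin n))
    (hmin : ∀ η : EuclideanSpace ℝ (Fin n),
      ⟪f' x, ηstar⟫ + Ltil / 2 * ‖ηstar‖ ^ 2 + g (x + ηstar)
        ≤ ⟪f' x, η⟫ + Ltil / 2 * ‖η‖ ^ 2 + g (x + η)) :
    ∀ ξ : EuclideanSpace ℝ (Fin n),
      f (x + ηstar) + g (x + ηstar)
        ≤ f (x + ξ) + g (x + ξ) + Ltil / 2 * (‖ξ‖ ^ 2 - ‖ξ - ηstar‖ ^ 2) := by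
  intro ξ
  set d : EuclideanSpace ℝ (Fin n) := ξ - ηstar with hd
  have hξ : ξ = ηstar + d := by rw [hd]; abel
  -- strong minimality:
  have hstrong : ⟪f' x, ηstar⟫ + Ltil / 2 * ‖ηstar‖ ^ 2 + g (x + ηstar) + Ltil / 2 * ‖d‖ ^ 2
      ≤ ⟪f' x, ξ⟫ + Ltil / 2 * ‖ξ‖ ^ 2 + g (x + ξ) := by
    by_cases hd0 : d = 0
    · have : ξ = ηstar := by rw [hξ, hd0, add_zero]
      simp [this, hd0]
    · -- Ltil ≥ 0
      have hdn : 0 < ‖d‖ ^ 2 := pow_pos (norm_pos_iff.mpr hd0) 2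
      have hL0 : 0 ≤ L := by
        have h1 := grad_ineq hfconv (hf' x) d
        have h2 := hsmooth x d
        nlinarith
      have hc0 : 0 ≤ Ltil := le_trans hL0 hLL
      set B : ℝ := Ltil / 2 * ‖d‖ ^ 2 with hB
      set A : ℝ := (⟪f' x, ξ⟫ + Ltil / 2 * ‖ξ‖ ^ 2 + g (x + ξ))
        - (⟪f' x, ηstar⟫ + Ltil / 2 * ‖ηstar‖ ^ 2 + g (x + ηstar)) with hA
      have key : ∀ t : ℝ, t ∈ Set.Ioo (0:ℝ) 1 → (1 - t) * B ≤ A := by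
        intro t ht
        have ht0 : 0 < t := ht.1
        have ht1 : t < 1 := ht.2
        have hmin' := hmin (ηstar + t • d)
        have hgc : g (x + (ηstar + t • d)) ≤ (1 - t) * g (x + ηstar) + t * g (x + ξ) := by
          have h2 := hgconv.2 (Set.mem_univ (x + ηstar)) (Set.mem_univ (x + ξ))
            (by linarith : (0:ℝ) ≤ 1 - t) (le_of_lt ht0) (by ring)
          have heq : (1 - t) • (x + ηstar) + t • (x + ξ) = x + (ηstar + t • d) := by
            rw [hξ]; module
          rw [heq] at h2
          simpa [smul_eq_mul] using h2
        have hinner : ⟪f' x, ηstar + t • d⟫ = ⟪f' x, ηstar⟫ + t * ⟪f' x, d⟫ := by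
          rw [inner_add_right, real_inner_smul_right]
        have hinnerξ : ⟪f' x, ξ⟫ = ⟪f' x, ηstar⟫ + ⟪f' x, d⟫ := by
          rw [hξ, inner_add_right]
        have hnorm1 : ‖ηstar + t • d‖ ^ 2
            = ‖ηstar‖ ^ 2 + 2 * (t * ⟪ηstar, d⟫) + t ^ 2 * ‖d‖ ^ 2 := by
          rw [norm_add_sq_real, real_inner_smul_right, norm_smul]
          simp [mul_pow, abs_of_pos ht0]
        have hnorm2 : ‖ξ‖ ^ 2 = ‖ηstar‖ ^ 2 + 2 * ⟪ηstar, d⟫ + ‖d‖ ^ 2 := by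
          rw [hξ, norm_add_sq_real]
        rw [hinner, hnorm1] at hmin'
        rw [hA, hB, hinnerξ, hnorm2]
        nlinarith [mul_pos ht0 (sub_pos.mpr ht1)]
      have htend : Filter.Tendsto (fun t : ℝ => (1 - t) * B)
          (nhdsWithin 0 (Set.Ioi 0)) (nhds B) := by
        have : Filter.Tendsto (fun t : ℝ => (1 - t) * B) (nhds 0) (nhds ((1 - 0) * B)) := by
          exact (Continuous.mul (continuous_const.sub continuous_id) continuous_const).tendsto 0
        simpa using this.mono_left nhdsWithin_le_nhds
      have hBA : B ≤ A := by
        refine le_of_tendsto htend ?_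
        filter_upwards [Ioo_mem_nhdsGT_of_mem (Set.left_mem_Ico.mpr one_pos)] with t ht
        exact key t ht
      rw [hB, hA] at hBA
      linarith
  have hgrad := grad_ineq hfconv (hf' x) ξ
  have hsm := hsmooth x ηstar
  have hnormd : ‖ξ - ηstar‖ = ‖d‖ := by rw [hd]
  rw [hnormd]
  nlinarith [sq_nonneg ‖ηstar‖]
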